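/- arXiv:2411.07661 — 3 statements merged into one kernel-verified Lean document; each statement's English description precedes it below -/
import Mathlib

section
/- Suppose y^n ∈ X satisfies the optimality condition ∇H^n(y^n) − ∇F^n(u^n) + M(y^n − u^n) = 0 and δt < 2/(3L). Then with d^n = y^n − u^n, ⟨∇E^n(y^n), d^n⟩ ≤ −(2/(3δt) − L)‖d^n‖² − ‖d^n‖_M², i.e., ⟨∇E^n(y^n), d^n⟩ ≤ −‖d^n‖²_{N₂} with N₂ = (2/(3δt) − L)I + M; in particular d^n is a descent direction of E^n at y^n when d^n ≠ 0. -/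
open scoped RealInnerProductSpace
open InnerProductSpace

section helpers
variable {X : Type*} [NormedAddCommGroup X] [InnerProductSpace ℝ X] [FiniteDimensional ℝ X]

lemma HGA.add {f g : X → ℝ} {f' g' x : X} (hf : HasGradientAt f f' x)
    (hg : HasGradientAt g g' x) : HasGradientAt (fun u => f u + g u) (f' + g') x := by
  rw [hasGradientAt_iff_hasFDerivAt] at *
  rw [map_add]; exact hf.add hg

lemma HGA.sub {f g : X → ℝ} {f' g' x : X} (hf : HasGradientAt f f' x)
    (hg : HasGradientAt g g' x) : HasGradientAt (fun u => f u - g u) (f' - g') x := by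
  rw [hasGradientAt_iff_hasFDerivAt] at *
  rw [map_sub]; exact hf.sub hg

lemma HGA.const_mul {f : X → ℝ} {f' x : X} (r : ℝ) (hf : HasGradientAt f f' x) :
    HasGradientAt (fun u => r * f u) (r • f') x := by
  rw [hasGradientAt_iff_hasFDerivAt] at *
  simpa [map_smul] using hf.const_mul r

lemma HGA.inner_const_sub (c a x : X) : HasGradientAt (fun u : X => ⟪c, u - a⟫) c x := by
  rw [hasGradientAt_iff_hasFDerivAt]
  have h1 : HasFDerivAt (fun u : X => u - a) (ContinuousLinearMap.id ℝ X) x :=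
    (hasFDerivAt_id x).sub_const a
  have := ((toDual ℝ X c).hasFDerivAt (x := x - a)).comp x h1
  exact this

lemma HGA.norm_sub_sq (a x : X) :
    HasGradientAt (fun u : X => ‖u - a‖ ^ 2) ((2:ℝ) • (x - a)) x := by
  rw [hasGradientAt_iff_hasFDerivAt]
  have h1 : HasFDerivAt (fun u : X => u - a) (ContinuousLinearMap.id ℝ X) x :=
    (hasFDerivAt_id x).sub_const a
  have h2 := h1.inner ℝ h1
  have heq : (fun u : X => ‖u - a‖ ^ 2) = fun u : X => ⟪u - a, u - a⟫ := by
    ext u; rw [real_inner_self_eq_norm_sq]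
  rw [heq]
  convert h2 using 1
  · rfl
  ext v
  simp only [toDual_apply_apply, fderivInnerCLM_apply, ContinuousLinearMap.comp_apply,
    ContinuousLinearMap.prod_apply, ContinuousLinearMap.id_apply, two_smul,
    inner_add_left]
  rw [real_inner_comm]

end helpers

/-- Descent direction: if `yⁿ` satisfies the optimality condition
`∇Hⁿ(yⁿ) - ∇Fⁿ(uⁿ) + M(yⁿ - uⁿ) = 0` and `0 < δt < 2/(3L)`, then with `dⁿ = yⁿ - uⁿ`,
`⟪∇Eⁿ(yⁿ), dⁿ⟫ ≤ -(2/(3δt) - L)‖dⁿ‖² - ‖dⁿ‖²_M`. -/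
theorem descent_direction_un
    {X : Type*} [NormedAddCommGroup X] [InnerProductSpace ℝ X] [FiniteDimensional ℝ X]
    (H : X → ℝ) (h : X → X) (hH : ∀ x : X, HasGradientAt H (h x) x)
    (hHconv : ConvexOn ℝ Set.univ H)
    (F : X → ℝ) (f : X → X) (hF : ∀ x : X, HasGradientAt F (f x) x)
    (L : ℝ) (hL : 0 < L) (hLip : ∀ x y : X, ‖f x - f y‖ ≤ L * ‖x - y‖)
    (δt : ℝ) (hδt : 0 < δt) (hδt2 : δt < 2 / (3 * L))
    (M : X →L[ℝ] X) (hMsym : ∀ x y : X, ⟪M x, y⟫ = ⟪x, M y⟫)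
    (hMpsd : ∀ x : X, 0 ≤ ⟪M x, x⟫)
    (un unm1 : X)
    (Hn Fn En : X → ℝ)
    (hHn : ∀ u : X, Hn u = H u + (1 / δt) * ‖u - un‖ ^ 2)
    (hFn : ∀ u : X, Fn u = (1 / (3 * δt)) * ‖u - unm1‖ ^ 2 - F u
      - ⟪f un - f unm1, u - unm1⟫)
    (hEn : ∀ u : X, En u = Hn u - Fn u)
    (yn : X)
    (hopt : gradient Hn yn - gradient Fn un + M (yn - un) = 0) :
    ⟪gradient En yn, yn - un⟫
      ≤ -(2 / (3 * δt) - L) * ‖yn - un‖ ^ 2 - ⟪M (yn - un), yn - un⟫ := by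
  set c : X := f un - f unm1 with hc
  have gFn : ∀ x : X,
      HasGradientAt Fn ((1 / (3 * δt)) • ((2:ℝ) • (x - unm1)) - f x - c) x := by
    intro x
    have := HGA.sub (HGA.sub (HGA.const_mul (1 / (3 * δt)) (HGA.norm_sub_sq unm1 x)) (hF x))
      (HGA.inner_const_sub c unm1 x)
    exact this.congr_of_eventuallyEq (Filter.Eventually.of_forall fun u => hFn u)
  have gHn : HasGradientAt Hn (h yn + (1 / δt) • ((2:ℝ) • (yn - un))) yn := by
    have := HGA.add (hH yn) (HGA.const_mul (1 / δt) (HGA.norm_sub_sq un yn))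
    exact this.congr_of_eventuallyEq (Filter.Eventually.of_forall fun u => hHn u)
  have gEn : HasGradientAt En
      ((h yn + (1 / δt) • ((2:ℝ) • (yn - un)))
        - ((1 / (3 * δt)) • ((2:ℝ) • (yn - unm1)) - f yn - c)) yn := by
    have := HGA.sub gHn (gFn yn)
    exact this.congr_of_eventuallyEq (Filter.Eventually.of_forall fun u => hEn u)
  have eH : gradient Hn yn = h yn + (1 / δt) • ((2:ℝ) • (yn - un)) := gHn.gradient
  have eFu : gradient Fn un = (1 / (3 * δt)) • ((2:ℝ) • (un - unm1)) - f un - c :=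
    (gFn un).gradient
  rw [eH, eFu] at hopt
  have key : gradient En yn
      = ((-(2 / (3 * δt))) • (yn - un) + (f yn - f un)) - M (yn - un) := by
    rw [gEn.gradient]
    have hHy : h yn + (1 / δt) • ((2:ℝ) • (yn - un))
        = ((1 / (3 * δt)) • ((2:ℝ) • (un - unm1)) - f un - c) - M (yn - un) := by
      have := hopt
      abel_nf at this ⊢
      linear_combination (norm := module) this
    rw [hHy]
    match_scalars <;> field_simp <;> ring
  rw [key]
  have hd : ⟪f yn - f un, yn - un⟫ ≤ L * ‖yn - un‖ ^ 2 := by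
    calc ⟪f yn - f un, yn - un⟫ ≤ ‖f yn - f un‖ * ‖yn - un‖ := real_inner_le_norm _ _
    _ ≤ (L * ‖yn - un‖) * ‖yn - un‖ :=
        mul_le_mul_of_nonneg_right (hLip yn un) (norm_nonneg _)
    _ = L * ‖yn - un‖ ^ 2 := by ring
  rw [inner_sub_left, inner_add_left, real_inner_smul_left, real_inner_self_eq_norm_sq]
  nlinarith [hd]
end

section
/- Let (u^n)_{n ≥ 0} (with u^{−1} = u^0) be generated by the algorithm with û^n = u^n: at each step y^n satisfies ∇H^n(y^n) − ∇F^n(u^n) + M(y^n − u^n) = 0, d^n = y^n − u^n, λ_n ≥ 0 satisfies E^n(y^n + λ_n d^n) ≤ E^n(y^n) − α λ_n ‖d^n‖² for a fixed α > 0, and u^{n+1} = y^n + λ_n d^n. Assume E(u) = H(u) + F(u) is bounded below, and assume λ_max := sup_n λ_n satisfies λ_max < √(4/(3 δt L) − 1/2) − 1. Then ∑_{n=1}^∞ ‖u^{n+1} − u^n‖² < ∞. -/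
open scoped RealInnerProductSpace

section Helpers

variable {X : Type*} [NormedAddCommGroup X] [InnerProductSpace ℝ X] [CompleteSpace X]

lemma hga_add {f g : X → ℝ} {f' g' x : X} (hf : HasGradientAt f f' x)
    (hg : HasGradientAt g g' x) : HasGradientAt (fun v => f v + g v) (f' + g') x := by
  rw [hasGradientAt_iff_hasFDerivAt] at hf hg ⊢
  rw [map_add]; exact hf.add hg

lemma hga_const_mul {f : X → ℝ} {f' x : X} (c : ℝ) (hf : HasGradientAt f f' x) :
    HasGradientAt (fun v => c * f v) (c • f') x := by
  rw [hasGradientAt_iff_hasFDerivAt] at hf ⊢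
  simpa [map_smulₛₗ] using hf.const_mul c

lemma hga_sub {f g : X → ℝ} {f' g' x : X} (hf : HasGradientAt f f' x)
    (hg : HasGradientAt g g' x) : HasGradientAt (fun v => f v - g v) (f' - g') x := by
  rw [hasGradientAt_iff_hasFDerivAt] at hf hg ⊢
  rw [map_sub]; exact hf.sub hg

lemma hga_inner_const (c a x : X) : HasGradientAt (fun v => ⟪c, v - a⟫) c x := by
  rw [hasGradientAt_iff_hasFDerivAt]
  have h1 := ((InnerProductSpace.toDual ℝ X c).hasFDerivAt (x := x)).sub_const ⟪c, a⟫
  simpa [inner_sub_right, InnerProductSpace.toDual_apply_apply] using h1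

lemma hga_norm_sq (a x : X) :
    HasGradientAt (fun v => ‖v - a‖ ^ 2) ((2 : ℝ) • (x - a)) x := by
  rw [hasGradientAt_iff_hasFDerivAt]
  have h1 : HasFDerivAt (fun v : X => v - a) (ContinuousLinearMap.id ℝ X) x :=
    (hasFDerivAt_id x).sub_const a
  have h2 := h1.inner ℝ h1
  have heq : (fun v : X => ‖v - a‖ ^ 2) = fun v => ⟪v - a, v - a⟫ := by
    funext v
    rw [real_inner_self_eq_norm_sq]
  rw [heq]
  refine h2.congr_fderiv ?_
  ext w
  simp only [InnerProductSpace.toDual_apply_apply, fderivInnerCLM_apply,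
    ContinuousLinearMap.comp_apply, ContinuousLinearMap.prod_apply,
    ContinuousLinearMap.id_apply, real_inner_smul_left, inner_sub_left, inner_sub_right]
  have hc : ⟪w, x - a⟫ = ⟪x, w⟫ - ⟪a, w⟫ := by rw [real_inner_comm, inner_sub_left]
  linarith [hc, real_inner_comm w x, real_inner_comm w a]

lemma convex_grad_ineq {H : X → ℝ} {h : X → X} (hH : ∀ x : X, HasGradientAt H (h x) x)
    (hc : ConvexOn ℝ Set.univ H) (y w : X) :
    H y + ⟪h y, w - y⟫ ≤ H w := by
  set φ : ℝ → ℝ := fun t => H (y + t • (w - y)) with hφdef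
  have hconv : ConvexOn ℝ Set.univ φ := by
    refine ⟨convex_univ, fun t1 _ t2 _ a b ha hb hab => ?_⟩
    have h2 := hc.2 (Set.mem_univ (y + t1 • (w - y))) (Set.mem_univ (y + t2 • (w - y))) ha hb hab
    have harg : y + (a * t1 + b * t2) • (w - y)
        = a • (y + t1 • (w - y)) + b • (y + t2 • (w - y)) := by
      have h3 : a • (y + t1 • (w - y)) + b • (y + t2 • (w - y))
          = (a + b) • y + (a * t1 + b * t2) • (w - y) := by module
      rw [h3, hab, one_smul]
    simpa [hφdef, smul_eq_mul, harg] using h2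
  have hline : HasDerivAt (fun t : ℝ => y + t • (w - y)) (w - y) 0 := by
    simpa using ((hasDerivAt_id (0 : ℝ)).smul_const (w - y)).const_add y
  have hder : HasDerivAt φ ⟪h y, w - y⟫ 0 := by
    have h2 := (hH (y + (0 : ℝ) • (w - y))).hasFDerivAt.comp_hasDerivAt 0 hline
    simp only [zero_smul, add_zero, InnerProductSpace.toDual_apply_apply] at h2
    exact h2
  have hslope := hconv.le_slope_of_hasDerivAt (Set.mem_univ (0 : ℝ)) (Set.mem_univ 1)
    zero_lt_one hder
  have hφ1 : φ 1 = H w := by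
    have harg : y + (1 : ℝ) • (w - y) = w := by module
    simp [hφdef, harg]
  have hφ0 : φ 0 = H y := by simp [hφdef]
  rw [slope_def_field, hφ1, hφ0] at hslope
  have : (H w - H y) / (1 - 0) = H w - H y := by norm_num
  rw [this] at hslope
  linarith

lemma descent_lemma {G : X → ℝ} {g : X → X} (hG : ∀ x : X, HasGradientAt G (g x) x)
    {L : ℝ} (hL : 0 ≤ L) (hLip : ∀ x y : X, ‖g x - g y‖ ≤ L * ‖x - y‖) (x w : X) :
    G w ≤ G x + ⟪g x, w - x⟫ + L / 2 * ‖w - x‖ ^ 2 := by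
  set d := w - x with hd
  set ψ : ℝ → ℝ := fun t => G (x + t • d) - t * ⟪g x, d⟫ - L / 2 * ‖d‖ ^ 2 * t ^ 2 with hψdef
  have hline : ∀ t : ℝ, HasDerivAt (fun s : ℝ => x + s • d) d t := fun t => by
    simpa using ((hasDerivAt_id t).smul_const d).const_add x
  have hψ' : ∀ t : ℝ,
      HasDerivAt ψ (⟪g (x + t • d), d⟫ - ⟪g x, d⟫ - L / 2 * ‖d‖ ^ 2 * (2 * t)) t := by
    intro t
    have h1 : HasDerivAt (fun s : ℝ => G (x + s • d)) ⟪g (x + t • d), d⟫ t := by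
      have h2 := (hG (x + t • d)).hasFDerivAt.comp_hasDerivAt t (hline t)
      simp only [InnerProductSpace.toDual_apply_apply] at h2
      exact h2
    have h3 : HasDerivAt (fun s : ℝ => s * ⟪g x, d⟫) ⟪g x, d⟫ t := by
      simpa using (hasDerivAt_id t).mul_const ⟪g x, d⟫
    have h4 : HasDerivAt (fun s : ℝ => L / 2 * ‖d‖ ^ 2 * s ^ 2)
        (L / 2 * ‖d‖ ^ 2 * (2 * t)) t := by
      have h5 := (hasDerivAt_pow 2 t).const_mul (L / 2 * ‖d‖ ^ 2)
      simpa using h5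
    exact (h1.sub h3).sub h4
  have hanti : AntitoneOn ψ (Set.Icc (0 : ℝ) 1) := by
    apply antitoneOn_of_deriv_nonpos (convex_Icc 0 1)
    · exact fun t _ => ((hψ' t).differentiableAt).continuousAt.continuousWithinAt
    · exact fun t _ => ((hψ' t).differentiableAt).differentiableWithinAt
    · intro t ht
      rw [interior_Icc] at ht
      rw [(hψ' t).deriv]
      have hlip2 : ‖g (x + t • d) - g x‖ ≤ L * (t * ‖d‖) := by
        have h5 := hLip (x + t • d) x
        rw [add_sub_cancel_left, norm_smul, Real.norm_eq_abs, abs_of_pos ht.1] at h5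
        exact h5
      have h7 : ⟪g (x + t • d), d⟫ - ⟪g x, d⟫ ≤ L * (t * ‖d‖) * ‖d‖ := by
        rw [← inner_sub_left]
        exact (real_inner_le_norm _ _).trans
          (mul_le_mul_of_nonneg_right hlip2 (norm_nonneg d))
      nlinarith [h7]
  have hkey := hanti (Set.left_mem_Icc.2 zero_le_one) (Set.right_mem_Icc.2 zero_le_one)
    zero_le_one
  have hψ0 : ψ 0 = G x := by simp [hψdef]
  have hψ1 : ψ 1 = G w - ⟪g x, d⟫ - L / 2 * ‖d‖ ^ 2 := by
    have harg : x + d = w := by rw [hd]; abel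
    simp [hψdef, harg]
  rw [hψ0, hψ1] at hkey
  linarith

end Helpers

set_option maxHeartbeats 1000000 in
/-- Square summability of the iterate increments for the algorithm with
`ûⁿ = uⁿ` (note `u (n-1)` with ℕ-subtraction encodes the convention `u⁻¹ = u⁰`). -/
theorem square_summable_un
    {X : Type*} [NormedAddCommGroup X] [InnerProductSpace ℝ X] [FiniteDimensional ℝ X]
    (H : X → ℝ) (h : X → X) (hH : ∀ x : X, HasGradientAt H (h x) x)
    (hHconv : ConvexOn ℝ Set.univ H)
    (F : X → ℝ) (f : X → X) (hF : ∀ x : X, HasGradientAt F (f x) x)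
    (L : ℝ) (hL : 0 < L) (hLip : ∀ x y : X, ‖f x - f y‖ ≤ L * ‖x - y‖)
    (δt : ℝ) (hδt : 0 < δt) (hδt2 : δt < 2 / (3 * L))
    (M : X →L[ℝ] X) (hMsym : ∀ x y : X, ⟪M x, y⟫ = ⟪x, M y⟫)
    (hMpsd : ∀ x : X, 0 ≤ ⟪M x, x⟫)
    (u y : ℕ → X) (lam : ℕ → ℝ) (α : ℝ) (hα : 0 < α)
    (Hn Fn En : ℕ → X → ℝ)
    (hHn : ∀ n : ℕ, ∀ v : X, Hn n v = H v + (1 / δt) * ‖v - u n‖ ^ 2)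
    (hFn : ∀ n : ℕ, ∀ v : X, Fn n v = (1 / (3 * δt)) * ‖v - u (n - 1)‖ ^ 2 - F v
      - ⟪f (u n) - f (u (n - 1)), v - u (n - 1)⟫)
    (hEn : ∀ n : ℕ, ∀ v : X, En n v = Hn n v - Fn n v)
    (hopt : ∀ n : ℕ, gradient (Hn n) (y n) - gradient (Fn n) (u n) + M (y n - u n) = 0)
    (hlam0 : ∀ n : ℕ, 0 ≤ lam n)
    (hls : ∀ n : ℕ, En n (y n + lam n • (y n - u n))
      ≤ En n (y n) - α * lam n * ‖y n - u n‖ ^ 2)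
    (hupd : ∀ n : ℕ, u (n + 1) = y n + lam n • (y n - u n))
    (E : X → ℝ) (hE : ∀ v : X, E v = H v + F v)
    (hEbdd : BddBelow (Set.range E))
    (lamMax : ℝ) (hlamMax : ∀ n : ℕ, lam n ≤ lamMax)
    (hlamBound : lamMax < Real.sqrt (4 / (3 * δt * L) - 1 / 2) - 1) :
    Summable (fun n : ℕ => ‖u (n + 1) - u n‖ ^ 2) := by
  haveI : CompleteSpace X := FiniteDimensional.complete ℝ X
  obtain ⟨m, hm⟩ := hEbdd
  have hmle : ∀ v : X, m ≤ E v := fun v => hm ⟨v, rfl⟩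
  have hδt0 : δt ≠ 0 := ne_of_gt hδt
  have hL0 : L ≠ 0 := ne_of_gt hL
  have h3δt : (0 : ℝ) < 3 * δt := by linarith
  have hδtL : δt * (3 * L) < 2 := (lt_div_iff₀ (by positivity)).mp hδt2
  set c₁ : ℝ := 4 / (3 * δt) - L / 2 with hc₁
  have hc₁pos : 0 < c₁ := by
    rw [hc₁, sub_pos, div_lt_div_iff₀ two_pos h3δt]
    linarith only [hδtL]
  have hlamM0 : 0 ≤ lamMax := le_trans (hlam0 0) (hlamMax 0)
  set ρ : ℝ := (1 + lamMax) ^ 2 with hρ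
  have hρpos : 0 < ρ := by rw [hρ]; exact pow_pos (by linarith only [hlamM0]) 2
  have hsq : 1 + lamMax < Real.sqrt (4 / (3 * δt * L) - 1 / 2) := by
    linarith only [hlamBound]
  have hargpos : 0 < 4 / (3 * δt * L) - 1 / 2 := by
    by_contra hcon
    push_neg at hcon
    have h0 : Real.sqrt (4 / (3 * δt * L) - 1 / 2) = 0 := Real.sqrt_eq_zero'.mpr hcon
    rw [h0] at hsq
    linarith only [hsq, hlamM0]
  have hρT : ρ < 4 / (3 * δt * L) - 1 / 2 := by
    rw [hρ]
    have h1 := mul_self_lt_mul_self (by linarith : (0 : ℝ) ≤ 1 + lamMax) hsq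
    rw [Real.mul_self_sqrt hargpos.le] at h1
    linarith only [h1]
  have hT : ρ * L < c₁ := by
    have h5 : (4 / (3 * δt * L) - 1 / 2) * L = c₁ := by
      rw [hc₁]; field_simp
    calc ρ * L < (4 / (3 * δt * L) - 1 / 2) * L := mul_lt_mul_of_pos_right hρT hL
      _ = c₁ := h5
  set γ : ℝ := c₁ / ρ with hγ
  have hγpos : 0 < γ := by rw [hγ]; exact div_pos hc₁pos hρpos
  have hκpos : 0 < γ - L := by
    rw [hγ, sub_pos, lt_div_iff₀ hρpos]
    linarith only [hT]
  -- main one-step estimate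
  have step : ∀ n : ℕ,
      E (u (n + 1)) + (1 / (3 * δt) + L / 2 + (γ - L)) * ‖u (n + 1) - u n‖ ^ 2
        ≤ E (u n) + (1 / (3 * δt) + L / 2) * ‖u n - u (n - 1)‖ ^ 2 := by
    intro n
    set r : ℝ := 1 / (3 * δt) with hrdef
    have h13δt : 1 / (3 * δt) = r := hrdef.symm
    have h1δt : 1 / δt = 3 * r := by rw [hrdef]; field_simp
    have h2δt : 2 / δt = 6 * r := by rw [hrdef]; field_simp; ring
    have h23δt : 2 / (3 * δt) = 2 * r := by rw [hrdef]; ring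
    have hrpos : (0 : ℝ) < r := by rw [hrdef]; positivity
    set a := u (n - 1) with ha
    set d := y n - u n with hdd
    set p := u n - a with hp
    set c := f (u n) - f a with hc
    set s := u (n + 1) - u n with hs
    -- gradients
    have hHnfun : Hn n = fun v => H v + (1 / δt) * ‖v - u n‖ ^ 2 := funext (hHn n)
    have hFnfun : Fn n = fun v => (1 / (3 * δt)) * ‖v - a‖ ^ 2 - F v - ⟪c, v - a⟫ := by
      have h0 := funext (hFn n)
      rw [← ha] at h0
      rw [← hc] at h0
      exact h0
    have hvalH : (1 / δt) • ((2 : ℝ) • (y n - u n)) = (2 / δt) • d := by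
      rw [smul_smul, ← hdd]
      congr 1
      ring
    have hgH : gradient (Hn n) (y n) = h (y n) + (2 / δt) • d := by
      rw [hHnfun]
      have h2 := hga_add (hH (y n)) (hga_const_mul (1 / δt) (hga_norm_sq (u n) (y n)))
      rw [hvalH] at h2
      exact h2.gradient
    have hvalF : (1 / (3 * δt)) • ((2 : ℝ) • (u n - a)) = (2 / (3 * δt)) • p := by
      rw [smul_smul, ← hp]
      congr 1
      ring
    have hgF : gradient (Fn n) (u n) = (2 / (3 * δt)) • p - f (u n) - c := by
      rw [hFnfun]
      have h3 := hga_sub (hga_sub (hga_const_mul (1 / (3 * δt)) (hga_norm_sq a (u n)))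
        (hF (u n))) (hga_inner_const c a (u n))
      rw [hvalF] at h3
      exact h3.gradient
    -- optimality, scalar form
    have hopt' := hopt n
    rw [hgH, hgF, ← hdd] at hopt'
    have h4 := congrArg (fun z : X => ⟪z, d⟫) hopt'
    simp only [inner_add_left, inner_sub_left, real_inner_smul_left, inner_zero_left] at h4
    rw [h2δt, h23δt, real_inner_self_eq_norm_sq, real_inner_comm d p] at h4
    -- expansion of Eⁿ
    have hE_exp : ∀ v : X, En n v
        = H v + 3 * r * ‖v - u n‖ ^ 2 - r * ‖v - a‖ ^ 2 + F v + ⟪c, v - a⟫ := by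
      intro v
      rw [hEn n v, hHn n v, hFn n v, ← ha, ← hc, h1δt]
      ring
    have e_arg1 : y n - a = d + p := by rw [hdd, hp]; abel
    have e_arg2 : u (n + 1) - a = s + p := by rw [hs, hp]; abel
    have e_arg4 : u n - y n = -d := by rw [hdd]; abel
    have e_yn := hE_exp (y n)
    rw [← hdd, e_arg1, norm_add_sq_real, inner_add_right] at e_yn
    have e_un := hE_exp (u n)
    rw [sub_self, norm_zero, ← hp] at e_un
    have e_u1 := hE_exp (u (n + 1))
    rw [← hs, e_arg2, inner_add_right] at e_u1
    -- convexity of H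
    have f3 := convex_grad_ineq hH hHconv (y n) (u n)
    rw [e_arg4, inner_neg_right] at f3
    -- descent lemma for F
    have f4 := descent_lemma hF hL.le hLip (u n) (y n)
    rw [← hdd] at f4
    -- line search
    have h9 := hls n
    rw [← hupd n] at h9
    have h10 : 0 ≤ α * lam n * ‖y n - u n‖ ^ 2 :=
      mul_nonneg (mul_nonneg hα.le (hlam0 n)) (sq_nonneg _)
    have f8 : En n (u (n + 1)) ≤ En n (y n) := by linarith only [h9, h10]
    -- key inequality: Eⁿ(yⁿ) ≤ Eⁿ(uⁿ) - c₁ ‖d‖²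
    have f9 : En n (y n) ≤ En n (u n) - (4 * r - L / 2) * ‖d‖ ^ 2 := by
      linarith only [e_yn, e_un, f3, f4, h4, hMpsd d]
    -- step-size control
    have hs_eq : s = (1 + lam n) • d := by rw [hs, hupd n, hdd]; module
    have hs_norm : ‖s‖ ^ 2 = (1 + lam n) ^ 2 * ‖d‖ ^ 2 := by
      rw [hs_eq, norm_smul, mul_pow, Real.norm_eq_abs, sq_abs]
    have h1lam : (1 + lam n) ^ 2 ≤ ρ := by
      rw [hρ]
      exact pow_le_pow_left₀ (by linarith only [hlam0 n]) (by linarith only [hlamMax n]) 2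
    have hρd : ‖s‖ ^ 2 ≤ ρ * ‖d‖ ^ 2 := by
      rw [hs_norm]
      exact mul_le_mul_of_nonneg_right h1lam (sq_nonneg _)
    have hγρ : γ * ρ = c₁ := by rw [hγ]; field_simp
    have h43 : c₁ = 4 * r - L / 2 := by rw [hc₁, hrdef]; ring
    have hf4 : γ * ‖s‖ ^ 2 ≤ (4 * r - L / 2) * ‖d‖ ^ 2 := by
      have h1 := mul_le_mul_of_nonneg_left hρd (le_of_lt hγpos)
      have h2 : γ * (ρ * ‖d‖ ^ 2) = (4 * r - L / 2) * ‖d‖ ^ 2 := by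
        rw [← mul_assoc, hγρ, h43]
      linarith only [h1, h2]
    -- cross terms
    have hQ : ‖s + p‖ ^ 2 ≤ 2 * ‖s‖ ^ 2 + 2 * ‖p‖ ^ 2 := by
      have hQ0 := norm_add_sq_real s p
      have hQ1 := real_inner_le_norm s p
      linarith only [hQ0, hQ1, two_mul_le_add_sq ‖s‖ ‖p‖]
    have hQ' : r * ‖s + p‖ ^ 2 ≤ r * (2 * ‖s‖ ^ 2 + 2 * ‖p‖ ^ 2) :=
      mul_le_mul_of_nonneg_left hQ hrpos.le
    have hcnorm : ‖c‖ ≤ L * ‖p‖ := by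
      have h11 := hLip (u n) a
      rw [← hc, ← hp] at h11
      exact h11
    have hA6 : -⟪c, s⟫ ≤ L / 2 * (‖p‖ ^ 2 + ‖s‖ ^ 2) := by
      have h12 := abs_real_inner_le_norm c s
      have h13 : -⟪c, s⟫ ≤ ‖c‖ * ‖s‖ := by
        have h12' := (abs_le.mp h12).1
        linarith only [h12']
      have h14 : ‖c‖ * ‖s‖ ≤ L * ‖p‖ * ‖s‖ :=
        mul_le_mul_of_nonneg_right hcnorm (norm_nonneg s)
      linarith only [h13, h14, mul_nonneg hL.le (sq_nonneg (‖p‖ - ‖s‖))]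
    linarith only [f8, f9, e_u1, e_un, hf4, hQ', hA6, hE (u n), hE (u (n + 1))]
  -- telescoping
  have key : ∀ N : ℕ,
      E (u N) + (1 / (3 * δt) + L / 2) * ‖u N - u (N - 1)‖ ^ 2
        + (γ - L) * ∑ i ∈ Finset.range N, ‖u (i + 1) - u i‖ ^ 2
      ≤ E (u 0) + (1 / (3 * δt) + L / 2) * ‖u 0 - u (0 - 1)‖ ^ 2 := by
    intro N
    induction N with
    | zero => simp
    | succ N ih =>
      have hstep := step N
      rw [Finset.sum_range_succ, Nat.add_sub_cancel]
      linarith only [hstep, ih]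
  have hC : (0 : ℝ) ≤ 1 / (3 * δt) + L / 2 := by
    have h0 : (0 : ℝ) < 1 / (3 * δt) := by positivity
    linarith only [h0, hL]
  apply summable_of_sum_range_le (c := (E (u 0) - m) / (γ - L))
    (fun n => sq_nonneg _)
  intro N
  have h1 := key N
  have h2 := hmle (u N)
  have h3 : 0 ≤ (1 / (3 * δt) + L / 2) * ‖u N - u (N - 1)‖ ^ 2 :=
    mul_nonneg hC (sq_nonneg _)
  have h4 : (1 / (3 * δt) + L / 2) * ‖u 0 - u (0 - 1)‖ ^ 2 = 0 := by
    have h5 : u (0 - 1) = u 0 := rfl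
    rw [h5, sub_self, norm_zero]
    ring
  rw [le_div_iff₀ hκpos]
  linarith only [h1, h2, h3, h4]
end

section
/- Under the same algorithmic setting (û^n = u^n, descent line search with parameter α > 0, λ_max < √(4/(3 δt L) − 1/2) − 1, h and f Lipschitz), assume in addition that E is level-bounded, i.e., {x : E(x) ≤ c} is bounded for every c ∈ ℝ. Then the sequence (A(u^{n+1}, u^n))_n is monotone decreasing and converges to some limit ζ ∈ ℝ, and the sequence (u^n)_n is bounded, where A(x,y) = E(x) + (L/2 + 1/(3δt))‖x − y‖². -/
open scoped RealInnerProductSpace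
open Filter Topology
set_option maxHeartbeats 2000000
open Set

section helpers
variable {X : Type*} [NormedAddCommGroup X] [InnerProductSpace ℝ X] [CompleteSpace X]

lemma lineDeriv_aux {Φ : X → ℝ} {φ : X → X} (hΦ : ∀ x, HasGradientAt Φ (φ x) x)
    (a d : X) (t : ℝ) :
    HasDerivAt (fun s : ℝ => Φ (a + s • d)) ⟪φ (a + t • d), d⟫ t := by
  have hc : HasDerivAt (fun s : ℝ => a + s • d) d t := by
    simpa using ((hasDerivAt_id t).smul_const d).const_add a
  have := (hΦ (a + t • d)).hasFDerivAt.comp_hasDerivAt t hc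
  simpa [InnerProductSpace.toDual_apply_apply, Function.comp_def] using this

lemma convex_grad_ineq_s9 {Φ : X → ℝ} {φ : X → X}
    (hconv : ConvexOn ℝ Set.univ Φ) (hΦ : ∀ x, HasGradientAt Φ (φ x) x) (a b : X) :
    Φ a + ⟪φ a, b - a⟫ ≤ Φ b := by
  have hg0 : HasDerivAt (fun s : ℝ => Φ (a + s • (b - a))) ⟪φ a, b - a⟫ 0 := by
    simpa using lineDeriv_aux hΦ a (b - a) 0
  have gconv : ConvexOn ℝ Set.univ fun s : ℝ => Φ (a + s • (b - a)) := by
    have h1 := hconv.comp_affineMap (AffineMap.lineMap a b)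
    have h2 : (fun s : ℝ => Φ (a + s • (b - a))) = Φ ∘ (AffineMap.lineMap a b) := by
      funext s
      show Φ _ = Φ _
      congr 1
      rw [AffineMap.lineMap_apply_module]
      module
    rw [h2]
    simpa using h1
  have := gconv.le_slope_of_hasDerivAt (Set.mem_univ (0:ℝ)) (Set.mem_univ (1:ℝ)) zero_lt_one hg0
  rw [slope_def_field] at this
  simp at this
  linarith

lemma mono_grad_ineq {Φ : X → ℝ} {φ : X → X}
    (hΦ : ∀ x, HasGradientAt Φ (φ x) x)
    (hmono : ∀ x y : X, 0 ≤ ⟪φ x - φ y, x - y⟫) (a b : X) :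
    Φ a + ⟪φ a, b - a⟫ ≤ Φ b := by
  set d := b - a with hd
  have hg : ∀ t : ℝ, HasDerivAt (fun s : ℝ => Φ (a + s • d)) ⟪φ (a + t • d), d⟫ t :=
    lineDeriv_aux hΦ a d
  have hcont : ContinuousOn (fun s : ℝ => Φ (a + s • d)) (Set.Icc 0 1) :=
    fun t _ => ((hg t).continuousAt).continuousWithinAt
  obtain ⟨ξ, hξ, hval⟩ := exists_hasDerivAt_eq_slope (fun s : ℝ => Φ (a + s • d))
    (fun t => ⟪φ (a + t • d), d⟫) zero_lt_one hcont (fun t _ => hg t)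
  have key : ⟪φ a, d⟫ ≤ ⟪φ (a + ξ • d), d⟫ := by
    have h1 := hmono (a + ξ • d) a
    have h2 : (a + ξ • d) - a = ξ • d := by abel
    rw [h2, real_inner_smul_right, inner_sub_left] at h1
    nlinarith [hξ.1]
  have hb : a + (1:ℝ) • d = b := by simp [hd]
  rw [hb] at hval
  have hval' : ⟪φ (a + ξ • d), d⟫ = Φ b - Φ a := by simpa using hval
  linarith [hval' ▸ key]

lemma hasGradientAt_of_hasFDerivAt' {Φ : X → ℝ} {L' : X →L[ℝ] ℝ} {g x : X}
    (hf : HasFDerivAt Φ L' x) (hg : ∀ w, L' w = ⟪g, w⟫) : HasGradientAt Φ g x := by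
  rw [hasGradientAt_iff_hasFDerivAt]
  have : InnerProductSpace.toDual ℝ X g = L' := by
    ext w; rw [InnerProductSpace.toDual_apply_apply, hg w]
  rwa [this]

lemma step_descent
    (H : X → ℝ) (h : X → X) (hH : ∀ x : X, HasGradientAt H (h x) x)
    (hHconv : ConvexOn ℝ Set.univ H)
    (F : X → ℝ) (f : X → X) (hF : ∀ x : X, HasGradientAt F (f x) x)
    (L : ℝ) (hL : 0 < L) (hLip : ∀ x y : X, ‖f x - f y‖ ≤ L * ‖x - y‖)
    (δt : ℝ) (hδt : 0 < δt)
    (M : X →L[ℝ] X) (hMpsd : ∀ x : X, 0 ≤ ⟪M x, x⟫)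
    (p q z r : X) (lam α : ℝ) (hα : 0 < α) (hlam0 : 0 ≤ lam)
    (Hnf Fnf Enf : X → ℝ)
    (hHnd : ∀ v, Hnf v = H v + (1 / δt) * ‖v - q‖ ^ 2)
    (hFnd : ∀ v, Fnf v = (1 / (3 * δt)) * ‖v - p‖ ^ 2 - F v - ⟪f q - f p, v - p⟫)
    (hEnd : ∀ v, Enf v = Hnf v - Fnf v)
    (hoptd : gradient Hnf z - gradient Fnf q + M (z - q) = 0)
    (hlsd : Enf (z + lam • (z - q)) ≤ Enf z - α * lam * ‖z - q‖ ^ 2)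
    (hr : r = z + lam • (z - q))
    (lamMax : ℝ) (hlamMax : lam ≤ lamMax)
    (hlamBound : lamMax < Real.sqrt (4 / (3 * δt * L) - 1 / 2) - 1)
    (E : X → ℝ) (hE : ∀ v, E v = H v + F v) :
    E r + (L / 2 + 1 / (3 * δt)) * ‖r - q‖ ^ 2 ≤ E q + (L / 2 + 1 / (3 * δt)) * ‖q - p‖ ^ 2 := by
  -- gradients
  have hGy : gradient Hnf z = h z + (2 / δt) • (z - q) := by
    have hfun : Hnf = fun v => H v + (1 / δt) * ‖v - q‖ ^ 2 := funext hHnd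
    have hfd : HasFDerivAt (fun v => H v + (1 / δt) * ‖v - q‖ ^ 2)
        ((InnerProductSpace.toDual ℝ X (h z)) +
          (1 / δt) • (2 • (innerSL ℝ (z - q)).comp (ContinuousLinearMap.id ℝ X))) z :=
      (hH z).hasFDerivAt.add ((((hasFDerivAt_id z).sub_const q).norm_sq).const_mul (1 / δt))
    have hga := hasGradientAt_of_hasFDerivAt' (g := h z + (2 / δt) • (z - q)) hfd (fun w => by
      simp [InnerProductSpace.toDual_apply_apply, inner_add_left, inner_sub_left, real_inner_smul_left]
      ring)
    rw [hfun]; exact hga.gradient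
  have hGu : gradient Fnf q = (2 / (3 * δt)) • (q - p) - f q - (f q - f p) := by
    have hfun : Fnf = fun v => (1 / (3 * δt)) * ‖v - p‖ ^ 2 - F v - ⟪f q - f p, v - p⟫ :=
      funext hFnd
    have hsub : (fun v : X => (⟪f q - f p, v - p⟫ : ℝ)) =
        fun v => innerSL ℝ (f q - f p) v - ⟪f q - f p, p⟫ := by
      funext v; simp only [innerSL_apply_apply, inner_sub_right]
    have hi : HasFDerivAt (fun v : X => (⟪f q - f p, v - p⟫ : ℝ)) (innerSL ℝ (f q - f p)) q := by
      rw [hsub]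
      simpa using ((innerSL ℝ (f q - f p)).hasFDerivAt (x := q)).sub_const
        (⟪f q - f p, p⟫ : ℝ)
    have hfd : HasFDerivAt (fun v => (1 / (3 * δt)) * ‖v - p‖ ^ 2 - F v - ⟪f q - f p, v - p⟫)
        ((1 / (3 * δt)) • (2 • (innerSL ℝ (q - p)).comp (ContinuousLinearMap.id ℝ X))
          - InnerProductSpace.toDual ℝ X (f q) - innerSL ℝ (f q - f p)) q :=
      (((((hasFDerivAt_id q).sub_const p).norm_sq).const_mul (1 / (3 * δt))).sub
        (hF q).hasFDerivAt).sub hi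
    have hga := hasGradientAt_of_hasFDerivAt'
      (g := (2 / (3 * δt)) • (q - p) - f q - (f q - f p)) hfd (fun w => by
      simp only [ContinuousLinearMap.sub_apply, ContinuousLinearMap.smul_apply,
        ContinuousLinearMap.coe_smul', Pi.smul_apply, ContinuousLinearMap.comp_apply,
        ContinuousLinearMap.id_apply, innerSL_apply_apply, InnerProductSpace.toDual_apply_apply,
        smul_eq_mul, inner_sub_left, real_inner_smul_left]
      ring)
    rw [hfun]; exact hga.gradient
  set d := z - q with hdd
  -- optimality scalar identity
  have hvec : h z + (2 / δt) • d - ((2 / (3 * δt)) • (q - p) - f q - (f q - f p)) = -(M d) := by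
    rw [hGy, hGu] at hoptd
    exact eq_neg_of_add_eq_zero_left hoptd
  have hsc := congrArg (fun v : X => (⟪v, d⟫ : ℝ)) hvec
  simp only [inner_add_left, inner_sub_left, real_inner_smul_left, inner_neg_left] at hsc
  rw [real_inner_self_eq_norm_sq] at hsc
  have hMdd : (0:ℝ) ≤ ⟪M d, d⟫ := hMpsd d
  -- convexity of H
  have hHq : H z + ⟪h z, q - z⟫ ≤ H q := convex_grad_ineq_s9 hHconv hH z q
  have hqz : ⟪h z, q - z⟫ = -⟪h z, d⟫ := by
    rw [hdd, show q - z = -(z - q) by abel, inner_neg_right]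
  have hHq' : H z - ⟪h z, d⟫ ≤ H q := by rw [hqz] at hHq; linarith
  -- strong convexity part via Ψ
  have hΨgrad : ∀ x : X, HasGradientAt (fun v => (L / 2) * ‖v - p‖ ^ 2 - F v)
      (L • (x - p) - f x) x := by
    intro x
    have hfd : HasFDerivAt (fun v => (L / 2) * ‖v - p‖ ^ 2 - F v)
        ((L / 2) • (2 • (innerSL ℝ (x - p)).comp (ContinuousLinearMap.id ℝ X))
          - InnerProductSpace.toDual ℝ X (f x)) x :=
      ((((hasFDerivAt_id x).sub_const p).norm_sq).const_mul (L / 2)).sub (hF x).hasFDerivAt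
    exact hasGradientAt_of_hasFDerivAt' (g := L • (x - p) - f x) hfd (fun w => by
      simp [InnerProductSpace.toDual_apply_apply, inner_add_left, inner_sub_left, real_inner_smul_left]
      ring)
  have hψmono : ∀ x w : X, 0 ≤ ⟪(L • (x - p) - f x) - (L • (w - p) - f w), x - w⟫ := by
    intro x w
    have he : (L • (x - p) - f x) - (L • (w - p) - f w) = L • (x - w) - (f x - f w) := by
      module
    rw [he, inner_sub_left, real_inner_smul_left, real_inner_self_eq_norm_sq]
    have hcs := real_inner_le_norm (f x - f w) (x - w)
    have hlip := hLip x w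
    nlinarith [norm_nonneg (x - w), norm_nonneg (f x - f w)]
  have hΨq := mono_grad_ineq hΨgrad hψmono q z
  have hψin : ⟪L • (q - p) - f q, z - q⟫ = L * ⟪q - p, d⟫ - ⟪f q, d⟫ := by
    rw [← hdd, inner_sub_left, real_inner_smul_left]
  rw [hψin] at hΨq
  -- norm expansions
  have hzp : ‖z - p‖ ^ 2 = ‖q - p‖ ^ 2 + 2 * ⟪q - p, d⟫ + ‖d‖ ^ 2 := by
    rw [show z - p = (q - p) + d by rw [hdd]; abel, @norm_add_sq_real]
  have hrq : r - q = (1 + lam) • d := by rw [hr, hdd]; module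
  have hA : ‖r - q‖ ^ 2 = (1 + lam) ^ 2 * ‖d‖ ^ 2 := by
    rw [hrq, norm_smul, Real.norm_eq_abs, abs_of_nonneg (by linarith : (0:ℝ) ≤ 1 + lam)]
    ring
  have hrp : ‖r - p‖ ^ 2 = ‖q - p‖ ^ 2 + 2 * ⟪q - p, r - q⟫ + ‖r - q‖ ^ 2 := by
    rw [show r - p = (q - p) + (r - q) by abel, @norm_add_sq_real]
  have hΔrp : ⟪f q - f p, r - p⟫ = ⟪f q - f p, r - q⟫ + ⟪f q - f p, q - p⟫ := by
    rw [show r - p = (r - q) + (q - p) by abel, inner_add_right]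
  have hΔzp : ⟪f q - f p, z - p⟫ = ⟪f q - f p, d⟫ + ⟪f q - f p, q - p⟫ := by
    rw [show z - p = d + (q - p) by rw [hdd]; abel, inner_add_right]
  rw [hzp] at hΨq
  -- En expansions
  have hEnz : Enf z = H z + (1 / δt) * ‖d‖ ^ 2
      - (1 / (3 * δt)) * (‖q - p‖ ^ 2 + 2 * ⟪q - p, d⟫ + ‖d‖ ^ 2)
      + F z + (⟪f q - f p, d⟫ + ⟪f q - f p, q - p⟫) := by
    rw [hEnd, hHnd, hFnd, ← hdd, hzp, hΔzp]; ring
  have hEnq : Enf q = H q - (1 / (3 * δt)) * ‖q - p‖ ^ 2 + F q + ⟪f q - f p, q - p⟫ := by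
    rw [hEnd, hHnd, hFnd]
    simp [sub_self]
    ring
  have hEnr : Enf r = H r + (1 / δt) * ‖r - q‖ ^ 2
      - (1 / (3 * δt)) * (‖q - p‖ ^ 2 + 2 * ⟪q - p, r - q⟫ + ‖r - q‖ ^ 2)
      + F r + (⟪f q - f p, r - q⟫ + ⟪f q - f p, q - p⟫) := by
    rw [hEnd, hHnd, hFnd, hrp, hΔrp]; ring
  have h3δ : (1:ℝ) / δt = 3 * (1 / (3 * δt)) := by field_simp
  have h6δ : (2:ℝ) / δt = 6 * (1 / (3 * δt)) := by field_simp; ring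
  have h23δ : (2:ℝ) / (3 * δt) = 2 * (1 / (3 * δt)) := by ring
  rw [h6δ, h23δ] at hsc
  rw [h3δ] at hEnz hEnr
  simp only [inner_sub_left] at hsc hΨq hEnz hEnq hEnr
  -- line search gives En r ≤ En z - α lam c2 ≤ En z
  have hlsr : Enf r ≤ Enf z := by
    rw [hr]
    have hnn : 0 ≤ α * lam * ‖z - q‖ ^ 2 := by positivity
    linarith [hlsd]
  -- key one-step energy inequality
  have hF1 : Enf r ≤ Enf q - (4 * (1 / (3 * δt)) - L / 2) * ‖d‖ ^ 2 := by
    have hEnzq : Enf z ≤ Enf q - (4 * (1 / (3 * δt)) - L / 2) * ‖d‖ ^ 2 - ⟪M d, d⟫ := by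
      rw [hEnz, hEnq]
      linarith [hHq', hΨq, hsc]
    linarith [hlsr, hMdd]
  -- Cauchy-Schwarz consequences
  have s1 : 2 * ⟪q - p, r - q⟫ ≤ ‖r - q‖ ^ 2 + ‖q - p‖ ^ 2 := by
    nlinarith [real_inner_le_norm (q - p) (r - q), sq_nonneg (‖q - p‖ - ‖r - q‖)]
  have s2 : (1 / (3 * δt)) * (2 * ⟪q - p, r - q⟫)
      ≤ (1 / (3 * δt)) * (‖r - q‖ ^ 2 + ‖q - p‖ ^ 2) :=
    mul_le_mul_of_nonneg_left s1 (by positivity)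
  have s3 : -⟪f q - f p, r - q⟫ ≤ (L / 2) * (‖r - q‖ ^ 2 + ‖q - p‖ ^ 2) := by
    have habs : -⟪f q - f p, r - q⟫ ≤ ‖f q - f p‖ * ‖r - q‖ := by
      have := abs_real_inner_le_norm (f q - f p) (r - q)
      have := neg_abs_le (⟪f q - f p, r - q⟫ : ℝ)
      linarith
    have hlip2 : ‖f q - f p‖ * ‖r - q‖ ≤ (L * ‖q - p‖) * ‖r - q‖ :=
      mul_le_mul_of_nonneg_right (hLip q p) (norm_nonneg _)
    nlinarith [sq_nonneg (‖q - p‖ - ‖r - q‖), hL.le, norm_nonneg (q - p), norm_nonneg (r - q)]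
  -- step-size bound
  have s4 : L * ‖r - q‖ ^ 2 ≤ (4 * (1 / (3 * δt)) - L / 2) * ‖d‖ ^ 2 := by
    have h0 : (0:ℝ) ≤ 1 + lamMax := by linarith
    have hsq : (1 + lamMax) ^ 2 < 4 / (3 * δt * L) - 1 / 2 :=
      (Real.lt_sqrt h0).mp (by linarith)
    have hKL : 4 * (1 / (3 * δt)) - L / 2 = (4 / (3 * δt * L) - 1 / 2) * L := by
      field_simp
    have h2 : L * (1 + lamMax) ^ 2 < 4 * (1 / (3 * δt)) - L / 2 := by
      have hm := mul_lt_mul_of_pos_right hsq hL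
      rw [← hKL] at hm
      linarith
    have hlam2 : (1 + lam) ^ 2 ≤ (1 + lamMax) ^ 2 := by nlinarith
    have h3 : L * (1 + lam) ^ 2 ≤ 4 * (1 / (3 * δt)) - L / 2 := by
      have := mul_le_mul_of_nonneg_left hlam2 hL.le
      linarith
    calc L * ‖r - q‖ ^ 2 = (L * (1 + lam) ^ 2) * ‖d‖ ^ 2 := by rw [hA]; ring
      _ ≤ (4 * (1 / (3 * δt)) - L / 2) * ‖d‖ ^ 2 :=
        mul_le_mul_of_nonneg_right h3 (sq_nonneg _)
  -- conclude
  simp only [inner_sub_left] at s2 s3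
  rw [hE r, hE q]
  rw [hEnr, hEnq] at hF1
  linarith [hF1, s2, s3, s4]

end helpers

/-- Under the algorithmic setting with `ûⁿ = uⁿ` and level-boundedness of
`E`, the sequence `A(uⁿ⁺¹, uⁿ)` is monotone decreasing and converges to some limit `ζ`, and
the iterate sequence `(uⁿ)` is bounded. -/
theorem A_decreasing_and_bounded_un
    {X : Type*} [NormedAddCommGroup X] [InnerProductSpace ℝ X] [FiniteDimensional ℝ X]
    (H : X → ℝ) (h : X → X) (hH : ∀ x : X, HasGradientAt H (h x) x)
    (hHconv : ConvexOn ℝ Set.univ H)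
    (F : X → ℝ) (f : X → X) (hF : ∀ x : X, HasGradientAt F (f x) x)
    (L : ℝ) (hL : 0 < L) (hLip : ∀ x y : X, ‖f x - f y‖ ≤ L * ‖x - y‖)
    (Lh : ℝ) (hLh : 0 ≤ Lh) (hhLip : ∀ x y : X, ‖h x - h y‖ ≤ Lh * ‖x - y‖)
    (δt : ℝ) (hδt : 0 < δt) (hδt2 : δt < 2 / (3 * L))
    (M : X →L[ℝ] X) (hMsym : ∀ x y : X, ⟪M x, y⟫ = ⟪x, M y⟫)
    (hMpsd : ∀ x : X, 0 ≤ ⟪M x, x⟫)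
    (u y : ℕ → X) (lam : ℕ → ℝ) (α : ℝ) (hα : 0 < α)
    (Hn Fn En : ℕ → X → ℝ)
    (hHn : ∀ n : ℕ, ∀ v : X, Hn n v = H v + (1 / δt) * ‖v - u n‖ ^ 2)
    (hFn : ∀ n : ℕ, ∀ v : X, Fn n v = (1 / (3 * δt)) * ‖v - u (n - 1)‖ ^ 2 - F v
      - ⟪f (u n) - f (u (n - 1)), v - u (n - 1)⟫)
    (hEn : ∀ n : ℕ, ∀ v : X, En n v = Hn n v - Fn n v)
    (hopt : ∀ n : ℕ, gradient (Hn n) (y n) - gradient (Fn n) (u n) + M (y n - u n) = 0)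
    (hlam0 : ∀ n : ℕ, 0 ≤ lam n)
    (hls : ∀ n : ℕ, En n (y n + lam n • (y n - u n))
      ≤ En n (y n) - α * lam n * ‖y n - u n‖ ^ 2)
    (hupd : ∀ n : ℕ, u (n + 1) = y n + lam n • (y n - u n))
    (E : X → ℝ) (hE : ∀ v : X, E v = H v + F v)
    (hlevel : ∀ c : ℝ, Bornology.IsBounded {x : X | E x ≤ c})
    (lamMax : ℝ) (hlamMax : ∀ n : ℕ, lam n ≤ lamMax)
    (hlamBound : lamMax < Real.sqrt (4 / (3 * δt * L) - 1 / 2) - 1)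
    (Afun : X → X → ℝ)
    (hAfun : ∀ x y : X, Afun x y = E x + (L / 2 + 1 / (3 * δt)) * ‖x - y‖ ^ 2) :
    (Antitone fun n : ℕ => Afun (u (n + 1)) (u n)) ∧
    (∃ ζ : ℝ, Tendsto (fun n : ℕ => Afun (u (n + 1)) (u n)) atTop (𝓝 ζ)) ∧
    Bornology.IsBounded (Set.range u) := by
  have key : ∀ n : ℕ, Afun (u (n + 1 + 1)) (u (n + 1)) ≤ Afun (u (n + 1)) (u n) := by
    intro n
    have h1 := step_descent H h hH hHconv F f hF L hL hLip δt hδt M hMpsd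
      (u n) (u (n + 1)) (y (n + 1)) (u (n + 1 + 1)) (lam (n + 1)) α hα (hlam0 (n + 1))
      (Hn (n + 1)) (Fn (n + 1)) (En (n + 1))
      (fun v => hHn (n + 1) v)
      (fun v => by simpa using hFn (n + 1) v)
      (fun v => hEn (n + 1) v)
      (hopt (n + 1))
      (hls (n + 1)) (hupd (n + 1))
      lamMax (hlamMax (n + 1)) hlamBound E hE
    rw [hAfun, hAfun]
    exact h1
  have hanti : Antitone fun n : ℕ => Afun (u (n + 1)) (u n) :=
    antitone_nat_of_succ_le key
  have hEeq : E = fun v => H v + F v := funext hE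
  have hEcont : Continuous E := by
    rw [hEeq]
    exact continuous_iff_continuousAt.mpr fun v =>
      ((hH v).continuousAt.add (hF v).continuousAt)
  obtain ⟨x₀, hx₀⟩ : ∃ x₀ : X, ∀ v, E x₀ ≤ E v := by
    have hS : IsCompact {x : X | E x ≤ E 0} :=
      Metric.isCompact_iff_isClosed_bounded.mpr
        ⟨isClosed_le hEcont continuous_const, hlevel (E 0)⟩
    have hne : (0:X) ∈ {x : X | E x ≤ E 0} := by simp
    obtain ⟨x₀, hx₀S, hmin⟩ := hS.exists_isMinOn ⟨0, hne⟩ hEcont.continuousOn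
    refine ⟨x₀, fun v => ?_⟩
    by_cases hv : E v ≤ E 0
    · exact hmin hv
    · exact le_trans (hmin hne) (le_of_not_ge hv)
  have hbdd : BddBelow (Set.range fun n : ℕ => Afun (u (n + 1)) (u n)) := by
    refine ⟨E x₀, ?_⟩
    rintro x ⟨n, rfl⟩
    show E x₀ ≤ Afun (u (n + 1)) (u n)
    rw [hAfun]
    have h2 : 0 ≤ (L / 2 + 1 / (3 * δt)) * ‖u (n + 1) - u n‖ ^ 2 := by positivity
    linarith [hx₀ (u (n + 1))]
  have hEb : ∀ n : ℕ, E (u (n + 1)) ≤ Afun (u 1) (u 0) := by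
    intro n
    have h1 : Afun (u (n + 1)) (u n) ≤ Afun (u (0 + 1)) (u 0) := hanti (Nat.zero_le n)
    rw [hAfun] at h1
    have h2 : 0 ≤ (L / 2 + 1 / (3 * δt)) * ‖u (n + 1) - u n‖ ^ 2 := by positivity
    simpa using le_trans (by linarith) h1
  have hsub : Set.range u ⊆ {x : X | E x ≤ Afun (u 1) (u 0)} ∪ {u 0} := by
    rintro x ⟨n, rfl⟩
    cases n with
    | zero => exact Or.inr rfl
    | succ m => exact Or.inl (hEb m)
  exact ⟨hanti, ⟨_, tendsto_atTop_ciInf hanti hbdd⟩,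
    (Bornology.IsBounded.union (hlevel _) Bornology.isBounded_singleton).subset hsub⟩
end
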